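/- Let T : X → X be a quasi-rigid continuous linear operator on a separable infinite-dimensional F-space X. Then Rec(T) is dense lineable: there exists a dense infinite-dimensional vector subspace Z of X with Z ⊆ Rec(T). -/

import Mathlib

open Filter Topology Set

/-- A point `x` is recurrent for `T` if `x` belongs to the closure of `{T^n x : n ≥ 1}`. -/
def RecPt {X : Type*} [TopologicalSpace X] (T : X → X) (x : X) : Prop :=
  x ∈ closure (Set.range fun n : ℕ => T^[n + 1] x)

/-- `T` is quasi-rigid. -/
def QuasiRigid {X : Type*} [TopologicalSpace X] (T : X → X) : Prop :=
  ∃ nk : ℕ → ℕ, StrictMono nk ∧ (∀ k, 1 ≤ nk k) ∧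
    ∃ Y : Set X, Dense Y ∧ ∀ y ∈ Y, Tendsto (fun k => T^[nk k] y) atTop (𝓝 y)

/-- If `T` is a quasi-rigid continuous linear operator on a separable
infinite-dimensional F-space `X` (over `𝕜 = ℝ` or `ℂ`), then `Rec(T)` is dense
lineable: it contains a dense infinite-dimensional vector subspace. -/
theorem stmt3 {𝕜 : Type*} [RCLike 𝕜] {X : Type*} [AddCommGroup X] [Module 𝕜 X]
    [TopologicalSpace X] [IsTopologicalAddGroup X] [ContinuousSMul 𝕜 X] [PolishSpace X]
    (hX : ¬ FiniteDimensional 𝕜 X)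
    (T : X →L[𝕜] X) (hqr : QuasiRigid ⇑T) :
    ∃ Z : Submodule 𝕜 X, Dense (Z : Set X) ∧ ¬ FiniteDimensional 𝕜 Z ∧
      ∀ x ∈ Z, RecPt (⇑T) x := by
  obtain ⟨nk, hmono, hone, Y, hYd, hY⟩ := hqr
  have hpow : ∀ (n : ℕ) (x : X), (⇑T)^[n] x = (T ^ n) x := fun n x =>
    (congrFun (FunLike.coe_pow_eq_iterate T n) x).symm
  set P : X → Prop := fun z => Tendsto (fun k => (⇑T)^[nk k] z) atTop (𝓝 z) with hP
  have hspan : ∀ x ∈ Submodule.span 𝕜 Y, P x := by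
    intro x hx
    refine Submodule.span_induction (p := fun z _ => P z) ?_ ?_ ?_ ?_ hx
    · intro y hy; exact hY y hy
    · simp only [hP]
      simp only [hpow, map_zero]
      exact tendsto_const_nhds
    · intro a b _ _ ha hb
      have := ha.add hb
      simpa only [hP, hpow, map_add] using this
    · intro c a _ ha
      have := (tendsto_const_nhds (x := c)).smul ha
      simpa only [hP, hpow, map_smul] using this
  refine ⟨Submodule.span 𝕜 Y, hYd.mono Submodule.subset_span, ?_, ?_⟩
  · intro hfd
    have hclosed : IsClosed (Submodule.span 𝕜 Y : Set X) :=
      (Submodule.span 𝕜 Y).closed_of_finiteDimensional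
    have : Submodule.span 𝕜 Y = ⊤ := by
      apply SetLike.coe_injective
      rw [Submodule.top_coe, ← hclosed.closure_eq,
        (hYd.mono Submodule.subset_span).closure_eq]
    rw [this] at hfd
    exact hX (Module.Finite.equiv (Submodule.topEquiv (R := 𝕜) (M := X)))
  · intro x hx
    have hPx := hspan x hx
    refine mem_closure_of_tendsto hPx ?_
    filter_upwards with k
    refine ⟨nk k - 1, ?_⟩
    show (⇑T)^[nk k - 1 + 1] x = _
    rw [Nat.sub_add_cancel (hone k)]
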